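/- If (x_n) is a seminormalized weakly null basic sequence in a Banach space X such that ‖∑_{n∈F} x_n‖ ≤ C for all finite F ⊆ ℕ (some constant C), then (x_n) is equivalent to the unit vector basis of c₀. -/

import Mathlib

open Filter

/-- A seminormalized weakly null basic sequence with uniformly bounded subset sums
is equivalent to the unit vector basis of c₀. -/
theorem stmt_13 {X : Type*} [NormedAddCommGroup X] [NormedSpace ℝ X] [CompleteSpace X]
    (x : ℕ → X) (a b : ℝ) (ha : 0 < a)
    (hbound : ∀ n, a ≤ ‖x n‖ ∧ ‖x n‖ ≤ b)
    (K : ℝ) (hbasic : ∀ (m k : ℕ), m ≤ k → ∀ α : ℕ → ℝ,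
      ‖∑ i ∈ Finset.range m, α i • x i‖ ≤ K * ‖∑ i ∈ Finset.range k, α i • x i‖)
    (hweak : ∀ f : X →L[ℝ] ℝ, Tendsto (fun n => f (x n)) atTop (nhds 0))
    (C : ℝ) (hC : ∀ F : Finset ℕ, ‖∑ n ∈ F, x n‖ ≤ C) :
    ∃ A B : ℝ, 0 < A ∧ 0 < B ∧ ∀ (k : ℕ) (α : ℕ → ℝ),
      (∀ i < k, A * |α i| ≤ ‖∑ i ∈ Finset.range k, α i • x i‖) ∧
      ((∀ i < k, |α i| ≤ 1) → ‖∑ i ∈ Finset.range k, α i • x i‖ ≤ B) := by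
  have hC0 : 0 ≤ C := by simpa using hC ∅
  have hK : 1 ≤ K := by
    have h := hbasic 1 1 le_rfl (fun _ => 1)
    simp [Finset.sum_range_one] at h
    have hx0 := (hbound 0).1
    nlinarith
  have hKpos : 0 < K := lt_of_lt_of_le one_pos hK
  refine ⟨a / (2 * K), 2 * C + 1, by positivity, by linarith, fun k α => ⟨?_, ?_⟩⟩
  · intro i hik
    have h1 := hbasic (i + 1) k hik α
    have h2 := hbasic i k hik.le α
    have hdiff : α i • x i =
        (∑ j ∈ Finset.range (i + 1), α j • x j) - (∑ j ∈ Finset.range i, α j • x j) := by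
      rw [Finset.sum_range_succ]; abel
    have hx : a * |α i| ≤ ‖α i • x i‖ := by
      rw [norm_smul, Real.norm_eq_abs, mul_comm]
      exact mul_le_mul_of_nonneg_left (hbound i).1 (abs_nonneg _)
    have hdn : ‖α i • x i‖ ≤ ‖∑ j ∈ Finset.range (i + 1), α j • x j‖ +
        ‖∑ j ∈ Finset.range i, α j • x j‖ := by
      rw [hdiff]; exact norm_sub_le _ _
    rw [div_mul_eq_mul_div, div_le_iff₀ (by positivity)]
    nlinarith [norm_nonneg (∑ j ∈ Finset.range k, α j • x j)]
  · intro hα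
    by_cases h0 : (∑ j ∈ Finset.range k, α j • x j) = 0
    · rw [h0, norm_zero]; linarith
    obtain ⟨f, hf1, hfx⟩ := exists_dual_vector ℝ _ (norm_ne_zero_iff.mpr h0)
    have key : ‖∑ j ∈ Finset.range k, α j • x j‖ ≤ ∑ j ∈ Finset.range k, |f (x j)| := by
      have : f (∑ j ∈ Finset.range k, α j • x j) = ∑ j ∈ Finset.range k, α j * f (x j) := by
        rw [map_sum]; exact Finset.sum_congr rfl fun j _ => by simp
      calc ‖∑ j ∈ Finset.range k, α j • x j‖
          = ∑ j ∈ Finset.range k, α j * f (x j) := by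
            rw [← this]; exact_mod_cast hfx.symm
        _ ≤ ∑ j ∈ Finset.range k, |f (x j)| := by
            refine Finset.sum_le_sum fun j hj => ?_
            calc α j * f (x j) ≤ |α j * f (x j)| := le_abs_self _
              _ = |α j| * |f (x j)| := abs_mul _ _
              _ ≤ 1 * |f (x j)| := by
                  exact mul_le_mul_of_nonneg_right (hα j (Finset.mem_range.mp hj)) (abs_nonneg _)
              _ = |f (x j)| := one_mul _
    have hsplit : ∑ j ∈ Finset.range k, |f (x j)| =
        (∑ j ∈ (Finset.range k).filter (fun j => 0 ≤ f (x j)), f (x j)) +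
        (∑ j ∈ (Finset.range k).filter (fun j => ¬ 0 ≤ f (x j)), -f (x j)) := by
      rw [← Finset.sum_filter_add_sum_filter_not (Finset.range k) (fun j => 0 ≤ f (x j))]
      congr 1
      · exact Finset.sum_congr rfl fun j hj => abs_of_nonneg (Finset.mem_filter.mp hj).2
      · exact Finset.sum_congr rfl fun j hj =>
          abs_of_neg (lt_of_not_ge (Finset.mem_filter.mp hj).2)
    have hpart : ∀ F : Finset ℕ, |f (∑ n ∈ F, x n)| ≤ C := by
      intro F
      calc |f (∑ n ∈ F, x n)| ≤ ‖f‖ * ‖∑ n ∈ F, x n‖ := f.le_opNorm _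
        _ = ‖∑ n ∈ F, x n‖ := by rw [hf1, one_mul]
        _ ≤ C := hC F
    have h1 : (∑ j ∈ (Finset.range k).filter (fun j => 0 ≤ f (x j)), f (x j)) ≤ C := by
      rw [← map_sum]
      exact (le_abs_self _).trans (hpart _)
    have h2 : (∑ j ∈ (Finset.range k).filter (fun j => ¬ 0 ≤ f (x j)), -f (x j)) ≤ C := by
      rw [show (∑ j ∈ (Finset.range k).filter (fun j => ¬ 0 ≤ f (x j)), -f (x j)) = -f (∑ j ∈ (Finset.range k).filter (fun j => ¬ 0 ≤ f (x j)), x j) by rw [map_sum]; simp]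
      exact (neg_le_abs _).trans (hpart _)
    calc ‖∑ j ∈ Finset.range k, α j • x j‖ ≤ ∑ j ∈ Finset.range k, |f (x j)| := key
      _ ≤ C + C := by rw [hsplit]; exact add_le_add h1 h2
      _ ≤ 2 * C + 1 := by linarith
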